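/- Let P be a 2n×2n real symmetric positive definite matrix satisfying the algebraic Riccati equation P A0 + A0ᵀ P − P θ2 θ2ᵀ P + I = 0, let r > 0, and set K = r⁻¹ θ2ᵀ P. Then for every complex number λ with Re(λ) ≥ r, every complex eigenvalue of the matrix A0 − λ θ2 K (regarded as a 2n×2n complex matrix) has strictly negative real part. -/

import Mathlib

open Matrix intervalIntegral

noncomputable section

/-- `θ1 = [I_n; 0]` as a `2n × n` real matrix (rows indexed by `Fin n ⊕ Fin n`). -/
def theta1 (n : ℕ) : Matrix (Fin n ⊕ Fin n) (Fin n) ℝ :=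
  Matrix.of (Sum.elim (fun i j => (1 : Matrix (Fin n) (Fin n) ℝ) i j) (fun _ _ => 0))

/-- `θ2 = [0; I_n]` as a `2n × n` real matrix. -/
def theta2 (n : ℕ) : Matrix (Fin n ⊕ Fin n) (Fin n) ℝ :=
  Matrix.of (Sum.elim (fun _ _ => 0) (fun i j => (1 : Matrix (Fin n) (Fin n) ℝ) i j))

/-- `α = [α_p I_n, α_v I_n]` as an `n × 2n` real matrix. -/
def alphaMat (n : ℕ) (αp αv : ℝ) : Matrix (Fin n) (Fin n ⊕ Fin n) ℝ :=
  Matrix.of fun i => Sum.elim (fun j => αp * (1 : Matrix (Fin n) (Fin n) ℝ) i j)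
    (fun j => αv * (1 : Matrix (Fin n) (Fin n) ℝ) i j)

/-- `A0 = θ1 θ2ᵀ + θ2 [α_p I_n, α_v I_n]`, i.e. the block matrix
`[[0, I_n], [α_p I_n, α_v I_n]]`. -/
def A0 (n : ℕ) (αp αv : ℝ) : Matrix (Fin n ⊕ Fin n) (Fin n ⊕ Fin n) ℝ :=
  theta1 n * (theta2 n)ᵀ + theta2 n * alphaMat n αp αv

/-! ### Auxiliary machinery -/


noncomputable def cmap {a b : Type*} (X : Matrix a b ℝ) : Matrix a b ℂ := X.map (Complex.ofReal ·)

lemma cmap_eq {a b : Type*} (X : Matrix a b ℝ) : cmap X = X.map (Complex.ofReal ·) := rfl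

lemma exists_eigenvector_of_isRoot_charpoly {ι : Type*} [Fintype ι] [DecidableEq ι]
    (M : Matrix ι ι ℂ) (μ : ℂ) (h : M.charpoly.IsRoot μ) :
    ∃ v : ι → ℂ, v ≠ 0 ∧ M *ᵥ v = μ • v := by
  have hdet : (μ • (1 : Matrix ι ι ℂ) - M).det = 0 := by
    have h' := h
    rw [Polynomial.IsRoot, Matrix.charpoly, eval_det, matPolyEquiv_charmatrix] at h'
    simpa [smul_eq_mul, Matrix.scalar, Algebra.algebraMap_eq_smul_one] using h'
  obtain ⟨v, hv0, hv⟩ := (Matrix.exists_mulVec_eq_zero_iff).2 hdet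
  refine ⟨v, hv0, ?_⟩
  rw [Matrix.sub_mulVec, Matrix.smul_mulVec, Matrix.one_mulVec, sub_eq_zero] at hv
  exact hv.symm

section QuadLemmas
variable {ι : Type*} [Fintype ι]

lemma selfdot_re_nonneg (w : ι → ℂ) : 0 ≤ (star w ⬝ᵥ w).re := by
  rw [dotProduct, Complex.re_sum]
  refine Finset.sum_nonneg fun i _ => ?_
  simp only [Pi.star_apply, Complex.mul_re, Complex.star_def, Complex.conj_re, Complex.conj_im]
  nlinarith [sq_nonneg (w i).re, sq_nonneg (w i).im]

lemma selfdot_im (w : ι → ℂ) : (star w ⬝ᵥ w).im = 0 := by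
  rw [dotProduct, Complex.im_sum]
  refine Finset.sum_eq_zero fun i _ => ?_
  simp [Complex.mul_im]; ring

lemma selfdot_re_pos {w : ι → ℂ} (hw : w ≠ 0) : 0 < (star w ⬝ᵥ w).re := by
  rw [dotProduct, Complex.re_sum]
  obtain ⟨i, hi⟩ := Function.ne_iff.1 hw
  refine Finset.sum_pos' (fun j _ => ?_) ⟨i, Finset.mem_univ i, ?_⟩
  · simp only [Pi.star_apply, Complex.mul_re, Complex.star_def, Complex.conj_re, Complex.conj_im]
    nlinarith [sq_nonneg (w j).re, sq_nonneg (w j).im]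
  · simp only [Pi.star_apply, Complex.mul_re, Complex.star_def, Complex.conj_re, Complex.conj_im]
    have := Complex.normSq_pos.2 hi
    simp only [Complex.normSq_apply] at this
    nlinarith
end QuadLemmas

/-- Main abstract Lyapunov/Riccati lemma over ℂ. -/
lemma hurwitz_aux {ι κ : Type*} [Fintype ι] [DecidableEq ι] [Fintype κ]
    (A P : Matrix ι ι ℂ) (Θ : Matrix ι κ ℂ)
    (hPH : Pᴴ = P)
    (hquad : ∀ v : ι → ℂ, v ≠ 0 → 0 < (star v ⬝ᵥ (P *ᵥ v)).re)
    (hRic : P * A + Aᴴ * P - P * Θ * Θᴴ * P + 1 = 0)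
    (r : ℝ) (hr : 0 < r) (lam : ℂ) (hlam : r ≤ lam.re)
    (μ : ℂ)
    (hroot : (A - lam • (Θ * (((r : ℂ))⁻¹ • (Θᴴ * P)))).charpoly.IsRoot μ) :
    μ.re < 0 := by
  obtain ⟨v, hv0, hvec⟩ := exists_eigenvector_of_isRoot_charpoly _ μ hroot
  have hrc : (starRingEnd ℂ) ((r : ℂ))⁻¹ = ((r : ℂ))⁻¹ := by
    rw [map_inv₀, Complex.conj_ofReal]
  -- right-assoc Riccati
  have hRic' : P * A + Aᴴ * P - P * (Θ * (Θᴴ * P)) + 1 = 0 := by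
    simpa only [Matrix.mul_assoc] using hRic
  have hA : Aᴴ * P = P * (Θ * (Θᴴ * P)) - 1 - P * A := by
    calc Aᴴ * P
        = (P * (Θ * (Θᴴ * P)) - 1 - P * A) + (P * A + Aᴴ * P - P * (Θ * (Θᴴ * P)) + 1) := by abel
      _ = P * (Θ * (Θᴴ * P)) - 1 - P * A := by rw [hRic', add_zero]
  have key : (A - lam • (Θ * (((r : ℂ))⁻¹ • (Θᴴ * P))))ᴴ * P
        + P * (A - lam • (Θ * (((r : ℂ))⁻¹ • (Θᴴ * P))))
      = (P * (Θ * (Θᴴ * P)) - 1)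
        - (((starRingEnd ℂ) lam + lam) * ((r : ℂ))⁻¹) • (P * (Θ * (Θᴴ * P))) := by
    simp only [conjTranspose_sub, conjTranspose_smul, conjTranspose_mul,
      conjTranspose_conjTranspose, hPH, hrc, Matrix.smul_mul, Matrix.mul_smul,
      Matrix.sub_mul, Matrix.mul_sub, smul_smul, Matrix.mul_assoc]
    rw [hA]
    match_scalars <;>
      simp (config := { failIfUnchanged := false }) only [star_mul', Complex.star_def,
        map_inv₀, Complex.conj_ofReal] <;>
      ring
  -- quadratic form at the eigenvector
  have hqform := congrArg (fun N => star v ⬝ᵥ (N *ᵥ v)) key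
  have hL1 : star v ⬝ᵥ (((A - lam • (Θ * (((r : ℂ))⁻¹ • (Θᴴ * P))))ᴴ * P) *ᵥ v)
      = (starRingEnd ℂ) μ * (star v ⬝ᵥ (P *ᵥ v)) := by
    rw [← Matrix.mulVec_mulVec, Matrix.dotProduct_mulVec, ← Matrix.star_mulVec, hvec, star_smul,
      smul_dotProduct]
    simp [Complex.star_def, smul_eq_mul]
  have hL2 : star v ⬝ᵥ ((P * (A - lam • (Θ * (((r : ℂ))⁻¹ • (Θᴴ * P))))) *ᵥ v)
      = μ * (star v ⬝ᵥ (P *ᵥ v)) := by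
    rw [← Matrix.mulVec_mulVec, hvec, Matrix.mulVec_smul, dotProduct_smul, smul_eq_mul]
  have hSv : star v ⬝ᵥ ((P * (Θ * (Θᴴ * P))) *ᵥ v)
      = star (Θᴴ *ᵥ (P *ᵥ v)) ⬝ᵥ (Θᴴ *ᵥ (P *ᵥ v)) := by
    rw [← Matrix.mulVec_mulVec, ← Matrix.mulVec_mulVec, ← Matrix.mulVec_mulVec]
    rw [Matrix.dotProduct_mulVec, Matrix.dotProduct_mulVec]
    congr 1
    rw [Matrix.star_mulVec, Matrix.star_mulVec, conjTranspose_conjTranspose, hPH]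
  have heq : (starRingEnd ℂ) μ * (star v ⬝ᵥ (P *ᵥ v)) + μ * (star v ⬝ᵥ (P *ᵥ v))
      = star (Θᴴ *ᵥ (P *ᵥ v)) ⬝ᵥ (Θᴴ *ᵥ (P *ᵥ v)) - star v ⬝ᵥ v
        - (((starRingEnd ℂ) lam + lam) * ((r : ℂ))⁻¹)
          * (star (Θᴴ *ᵥ (P *ᵥ v)) ⬝ᵥ (Θᴴ *ᵥ (P *ᵥ v))) := by
    rw [← hL1, ← hL2, ← dotProduct_add, ← Matrix.add_mulVec, hqform]
    rw [Matrix.sub_mulVec, Matrix.sub_mulVec, Matrix.smul_mulVec, Matrix.one_mulVec]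
    rw [dotProduct_sub, dotProduct_sub, dotProduct_smul, hSv, smul_eq_mul]
  -- real and imaginary parts
  set q : ℂ := star v ⬝ᵥ (P *ᵥ v) with hqdef
  set s : ℂ := star (Θᴴ *ᵥ (P *ᵥ v)) ⬝ᵥ (Θᴴ *ᵥ (P *ᵥ v)) with hsdef
  set t : ℂ := star v ⬝ᵥ v with htdef
  have hqconj : q = star q := by
    rw [hqdef]
    conv_lhs => rw [star_dotProduct]
    rw [Matrix.star_mulVec, hPH, ← Matrix.dotProduct_mulVec]
  have hqim : q.im = 0 := by
    have h := congrArg Complex.im hqconj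
    simp only [Complex.star_def, Complex.conj_im] at h
    linarith
  have hqre : 0 < q.re := hquad v hv0
  have hsre : 0 ≤ s.re := selfdot_re_nonneg _
  have hsim : s.im = 0 := selfdot_im _
  have htre : 0 < t.re := selfdot_re_pos hv0
  have htim : t.im = 0 := selfdot_im _
  have hre := congrArg Complex.re heq
  have hcre : (((r : ℂ))⁻¹).re = r⁻¹ := by
    rw [← Complex.ofReal_inv, Complex.ofReal_re]
  have hcim : (((r : ℂ))⁻¹).im = 0 := by
    rw [← Complex.ofReal_inv, Complex.ofReal_im]
  simp only [Complex.add_re, Complex.mul_re, Complex.sub_re, Complex.add_im, Complex.mul_im,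
    Complex.sub_im, Complex.conj_re, Complex.conj_im, hqim, hsim, htim, hcre, hcim,
    mul_zero, zero_mul, sub_zero, add_zero, zero_add, zero_sub, neg_zero, neg_neg,
    neg_mul] at hre
  have hcoef : 2 ≤ (lam.re + lam.re) * r⁻¹ := by
    have h1 : 2 * r ≤ lam.re + lam.re := by linarith
    have h2 : (0:ℝ) < r⁻¹ := inv_pos.2 hr
    calc (2:ℝ) = 2 * r * r⁻¹ := by field_simp
      _ ≤ (lam.re + lam.re) * r⁻¹ := mul_le_mul_of_nonneg_right h1 h2.le
  by_contra hmu
  push_neg at hmu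
  nlinarith [mul_nonneg (show (0:ℝ) ≤ (lam.re + lam.re) * r⁻¹ - 1 by linarith) hsre,
    mul_nonneg hmu hqre.le]

section CmapLemmas

lemma cmap_mul {a b c : Type*} [Fintype b] (X : Matrix a b ℝ) (Y : Matrix b c ℝ) :
    cmap (X * Y) = cmap X * cmap Y := by
  ext i j; simp [cmap, Matrix.mul_apply]

lemma cmap_add {a b : Type*} (X Y : Matrix a b ℝ) : cmap (X + Y) = cmap X + cmap Y := by
  ext i j; simp [cmap]

lemma cmap_sub {a b : Type*} (X Y : Matrix a b ℝ) : cmap (X - Y) = cmap X - cmap Y := by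
  ext i j; simp [cmap]

lemma cmap_one {a : Type*} [DecidableEq a] : cmap (1 : Matrix a a ℝ) = 1 := by
  ext i j; by_cases h : i = j <;> simp [cmap, Matrix.one_apply, h]

lemma cmap_zero {a b : Type*} : cmap (0 : Matrix a b ℝ) = 0 := by
  ext i j; simp [cmap]

lemma cmap_transpose {a b : Type*} (X : Matrix a b ℝ) : cmap Xᵀ = (cmap X)ᵀ := by
  ext i j; simp [cmap]

lemma cmap_conjTranspose {a b : Type*} (X : Matrix a b ℝ) : (cmap X)ᴴ = cmap Xᵀ := by
  ext i j; simp [cmap]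

lemma cmap_smul {a b : Type*} (t : ℝ) (X : Matrix a b ℝ) : cmap (t • X) = (t : ℂ) • cmap X := by
  ext i j; simp [cmap]

end CmapLemmas

section QuadPos
variable {ι : Type*} [Fintype ι]

lemma quad_expand (P : Matrix ι ι ℝ) (v : ι → ℂ) :
    star v ⬝ᵥ (cmap P *ᵥ v) =
      ∑ i, ∑ j, (starRingEnd ℂ) (v i) * ((P i j : ℂ) * v j) := by
  simp [dotProduct, mulVec, cmap, Finset.mul_sum, Matrix.map_apply]

lemma quad_re (P : Matrix ι ι ℝ) (v : ι → ℂ) :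
    (star v ⬝ᵥ (cmap P *ᵥ v)).re =
      (fun i => (v i).re) ⬝ᵥ (P *ᵥ fun i => (v i).re)
      + (fun i => (v i).im) ⬝ᵥ (P *ᵥ fun i => (v i).im) := by
  rw [quad_expand]
  rw [Complex.re_sum]
  simp only [Complex.re_sum, dotProduct, mulVec, Finset.mul_sum]
  rw [← Finset.sum_add_distrib]
  refine Finset.sum_congr rfl fun i _ => ?_
  rw [← Finset.sum_add_distrib]
  refine Finset.sum_congr rfl fun j _ => ?_
  simp [Complex.mul_re, Complex.mul_im]

lemma quad_pos {P : Matrix ι ι ℝ} (hP : P.PosDef) {v : ι → ℂ} (hv : v ≠ 0) :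
    0 < (star v ⬝ᵥ (cmap P *ᵥ v)).re := by
  rw [quad_re]
  set x : ι → ℝ := fun i => (v i).re
  set y : ι → ℝ := fun i => (v i).im
  have hxy : x ≠ 0 ∨ y ≠ 0 := by
    by_contra h
    push_neg at h
    exact hv (funext fun i => Complex.ext (congrFun h.1 i) (congrFun h.2 i))
  have hsd := hP.posSemidef
  rcases hxy with hx | hy
  · have h1 : 0 < x ⬝ᵥ (P *ᵥ x) := by simpa using hP.dotProduct_mulVec_pos hx
    have h2 : 0 ≤ y ⬝ᵥ (P *ᵥ y) := by simpa using hsd.dotProduct_mulVec_nonneg y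
    linarith
  · have h1 : 0 ≤ x ⬝ᵥ (P *ᵥ x) := by simpa using hsd.dotProduct_mulVec_nonneg x
    have h2 : 0 < y ⬝ᵥ (P *ᵥ y) := by simpa using hP.dotProduct_mulVec_pos hy
    linarith

end QuadPos

/-- per-eigenvalue Hurwitz conclusion from the proof of Theorem 2 of
the paper: if the real symmetric positive definite matrix `P` solves the algebraic
Riccati equation `P A0 + A0ᵀ P - P θ2 θ2ᵀ P + I = 0`, `r > 0` and `K = r⁻¹ θ2ᵀ P`,
then for every `λ ∈ ℂ` with `Re λ ≥ r`, every complex eigenvalue of `A0 - λ θ2 K`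
has strictly negative real part. -/
theorem riccati_gain_is_Hurwitz
    (n : ℕ) (hn : 1 ≤ n) (αp αv : ℝ)
    (P : Matrix (Fin n ⊕ Fin n) (Fin n ⊕ Fin n) ℝ) (hPsymm : P.IsSymm) (hPpos : P.PosDef)
    (hRiccati : P * A0 n αp αv + (A0 n αp αv)ᵀ * P
        - P * theta2 n * (theta2 n)ᵀ * P + 1 = 0)
    (r : ℝ) (hr : 0 < r)
    (K : Matrix (Fin n) (Fin n ⊕ Fin n) ℝ) (hK : K = r⁻¹ • ((theta2 n)ᵀ * P))
    (lam : ℂ) (hlam : r ≤ lam.re) :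
    ∀ μ : ℂ,
      (((A0 n αp αv).map (Complex.ofReal ·)
        - lam • ((theta2 n).map (Complex.ofReal ·) * K.map (Complex.ofReal ·))).charpoly).IsRoot μ
      → μ.re < 0 := by
  intro μ hroot
  have hPt : Pᵀ = P := hPsymm
  have hPH : (cmap P)ᴴ = cmap P := by rw [cmap_conjTranspose, hPt]
  have hquad : ∀ v : (Fin n ⊕ Fin n) → ℂ, v ≠ 0 → 0 < (star v ⬝ᵥ (cmap P *ᵥ v)).re :=
    fun v hv => quad_pos hPpos hv
  have hRic : cmap P * cmap (A0 n αp αv) + (cmap (A0 n αp αv))ᴴ * cmap P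
      - cmap P * cmap (theta2 n) * (cmap (theta2 n))ᴴ * cmap P + 1 = 0 := by
    have h := congrArg cmap hRiccati
    simp only [cmap_zero, cmap_add, cmap_sub, cmap_mul, cmap_one] at h
    rw [← cmap_conjTranspose, ← cmap_conjTranspose] at h
    exact h
  have hKmat : K.map (Complex.ofReal ·) = ((r : ℂ))⁻¹ • ((cmap (theta2 n))ᴴ * cmap P) := by
    rw [← cmap_eq, hK, cmap_smul, cmap_mul, ← cmap_conjTranspose, Complex.ofReal_inv]
  have hroot' : (cmap (A0 n αp αv)
      - lam • (cmap (theta2 n) * (((r : ℂ))⁻¹ • ((cmap (theta2 n))ᴴ * cmap P)))).charpoly.IsRoot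
        μ := by
    rw [← hKmat]
    exact hroot
  exact hurwitz_aux (cmap (A0 n αp αv)) (cmap P) (cmap (theta2 n)) hPH hquad hRic r hr lam hlam
    μ hroot'

end
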